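/- If a completely regular code with intersection array {β_0,...,β_{ρ-1}; γ_1,...,γ_ρ} exists in a Hamming graph H(n,q), then for all i ∈ {1,...,ρ} and j ∈ {0,...,ρ-i}, the product β_j·β_{j+1}···β_{j+i-1} is divisible by i!, and likewise γ_{j+1}·γ_{j+2}···γ_{j+i} is divisible by i!. -/

import Mathlib

open SimpleGraph

/-- The Hamming graph `H(n, α)`: vertices are `n`-tuples over `α`, adjacent iff
Hamming distance `1`. -/
def hammingGraph (n : ℕ) (α : Type*) [DecidableEq α] : SimpleGraph (Fin n → α) where
  Adj x y := hammingDist x y = 1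
  symm := by constructor; intro x y h; rwa [hammingDist_comm]
  loopless := by constructor; intro x h; simp [hammingDist_self] at h

/-- Distance from a vertex to a set of vertices. -/
noncomputable def distTo {V : Type*} (Γ : SimpleGraph V) (C : Set V) (v : V) : ℕ :=
  sInf (Γ.dist v '' C)

/-- `C` is a completely regular code of covering radius `ρ` with intersection array
`{β 0, …, β (ρ-1); γ 1, …, γ ρ}`: the distance partition of `C` is equitable with the
corresponding tridiagonal quotient matrix. -/
def IsCompletelyRegular {V : Type*} (Γ : SimpleGraph V) (C : Set V) (ρ : ℕ)
    (β γ : ℕ → ℕ) : Prop :=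
  C.Nonempty ∧
  (∀ v, distTo Γ C v ≤ ρ) ∧
  (∃ v, distTo Γ C v = ρ) ∧
  (∀ v t, distTo Γ C v = t → t < ρ →
    {u | Γ.Adj v u ∧ distTo Γ C u = t + 1}.ncard = β t) ∧
  (∀ v t, distTo Γ C v = t → 0 < t →
    {u | Γ.Adj v u ∧ distTo Γ C u = t - 1}.ncard = γ t)

/-- `Γ` is a distance-regular graph of diameter `D` with intersection numbers
`b 0, …, b (D-1)` and `c 1, …, c D`. -/
def IsDistanceRegular {V : Type*} (Γ : SimpleGraph V) (D : ℕ) (b c : ℕ → ℕ) : Prop :=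
  Γ.Connected ∧
  (∀ u v, Γ.dist u v ≤ D) ∧
  (∃ u v, Γ.dist u v = D) ∧
  (∀ u v i, Γ.dist u v = i → i < D →
    {w | Γ.Adj v w ∧ Γ.dist u w = i + 1}.ncard = b i) ∧
  (∀ u v i, Γ.dist u v = i → 0 < i →
    {w | Γ.Adj v w ∧ Γ.dist u w = i - 1}.ncard = c i)

section CRCAux
open Finset
variable {n : ℕ} {α : Type*} [DecidableEq α]

lemma hamming_exists_walk : ∀ (d : ℕ) (x y : Fin n → α), hammingDist x y = d →
    ∃ w : (hammingGraph n α).Walk x y, w.length = d := by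
  intro d
  induction d with
  | zero =>
    intro x y h
    obtain rfl := eq_of_hammingDist_eq_zero h
    exact ⟨SimpleGraph.Walk.nil, rfl⟩
  | succ d ih =>
    intro x y h
    have hne : x ≠ y := by intro e; rw [e, hammingDist_self] at h; omega
    obtain ⟨m, hm⟩ := Function.ne_iff.mp hne
    set x' := Function.update x m (y m) with hx'
    have had : hammingDist x x' = 1 := by
      have : ({i | x i ≠ x' i} : Finset (Fin n)) = {m} := by
        ext j
        by_cases hj : j = m <;> simp [hx', Function.update_apply, hj, hm]
      rw [hammingDist, this, Finset.card_singleton]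
    have hdd : hammingDist x' y = d := by
      have : ({i | x' i ≠ y i} : Finset (Fin n)) = ({i | x i ≠ y i} : Finset (Fin n)).erase m := by
        ext j
        by_cases hj : j = m <;> simp [hx', Function.update_apply, hj]
      rw [hammingDist, this, Finset.card_erase_of_mem (by simp [hm])]
      rw [hammingDist] at h
      omega
    obtain ⟨w, hw⟩ := ih x' y hdd
    exact ⟨SimpleGraph.Walk.cons (show (hammingGraph n α).Adj x x' from had) w, by simp [hw]⟩

lemma hamming_walk_le {x y : Fin n → α} (w : (hammingGraph n α).Walk x y) :
    hammingDist x y ≤ w.length := by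
  induction w with
  | nil => simp
  | cons h p ih =>
    calc hammingDist _ _ ≤ hammingDist _ _ + hammingDist _ _ := hammingDist_triangle _ _ _
    _ ≤ 1 + p.length := by rw [h]; omega
    _ = _ := by simp [Nat.add_comm]

lemma hamming_reachable (x y : Fin n → α) : (hammingGraph n α).Reachable x y :=
  ⟨(hamming_exists_walk _ x y rfl).choose⟩

lemma hamming_dist_eq (x y : Fin n → α) : (hammingGraph n α).dist x y = hammingDist x y := by
  obtain ⟨w, hw⟩ := hamming_exists_walk _ x y rfl
  refine le_antisymm (hw ▸ SimpleGraph.dist_le w) ?_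
  obtain ⟨p, hp⟩ := (hamming_reachable x y).exists_walk_length_eq_dist
  exact hp ▸ hamming_walk_le p

lemma hamming_c {x y : Fin n → α} (hd : 0 < hammingDist x y) :
    {w | (hammingGraph n α).Adj y w ∧ hammingDist x w = hammingDist x y - 1}.ncard
      = hammingDist x y := by
  classical
  set d := hammingDist x y with hdd
  set D : Finset (Fin n) := {i | x i ≠ y i} with hD
  have hDcard : D.card = d := rfl
  have himg : {w | (hammingGraph n α).Adj y w ∧ hammingDist x w = d - 1}
      = (fun m => Function.update y m (x m)) '' ↑D := by
    ext w
    simp only [Set.mem_setOf_eq, Set.mem_image, Finset.mem_coe]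
    constructor
    · rintro ⟨hadj, hw⟩
      have hadj' : hammingDist y w = 1 := hadj
      rw [hammingDist] at hadj'
      obtain ⟨m, hm⟩ := Finset.card_eq_one.mp hadj'
      have hmw : y m ≠ w m := by
        have := Finset.mem_singleton_self m
        rw [← hm] at this
        simpa using this
      have hothers : ∀ j, j ≠ m → w j = y j := by
        intro j hj
        by_contra hc
        have : j ∈ ({i | y i ≠ w i} : Finset (Fin n)) := by
          simp only [Finset.mem_filter, Finset.mem_univ, true_and]
          exact fun h : y j = w j => hc h.symm
        rw [hm] at this
        exact hj (Finset.mem_singleton.mp this)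
      have hw' : ({i | x i ≠ w i} : Finset (Fin n)).card = d - 1 := hw
      have hxw : x m = w m := by
        by_contra hxm
        have hset : ({i | x i ≠ w i} : Finset (Fin n)) = insert m (D.erase m) := by
          ext j
          by_cases hj : j = m
          · subst hj; simp [hxm]
          · simp [hj, hothers j hj, hD]
        rw [hset, Finset.card_insert_of_notMem (Finset.notMem_erase _ _)] at hw'
        have := Finset.pred_card_le_card_erase (s := D) (a := m)
        omega
      have hmD : m ∈ D := by
        have : x m ≠ y m := by rw [hxw]; exact fun h => hmw h.symm
        simp [hD, this]
      refine ⟨m, hmD, funext fun j => ?_⟩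
      by_cases hj : j = m
      · subst hj; simp [hxw]
      · simp [Function.update_apply, hj, hothers j hj]
    · rintro ⟨m, hmD, rfl⟩
      have hmD' : x m ≠ y m := by simpa [hD] using hmD
      constructor
      · show hammingDist y _ = 1
        have : ({i | y i ≠ Function.update y m (x m) i} : Finset (Fin n)) = {m} := by
          ext j
          by_cases hj : j = m
          · subst hj
            simp only [Function.update_self, Finset.mem_singleton, Finset.mem_filter,
              Finset.mem_univ, true_and]
            exact iff_of_true (fun h => hmD' h.symm) trivial
          · simp [Function.update_apply, hj]
        rw [hammingDist, this, Finset.card_singleton]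
      · have : ({i | x i ≠ Function.update y m (x m) i} : Finset (Fin n)) = D.erase m := by
          ext j
          by_cases hj : j = m
          · subst hj; simp
          · simp [Function.update_apply, hj, hD]
        rw [hammingDist, this, Finset.card_erase_of_mem hmD, hDcard]
  rw [himg, Set.ncard_image_of_injOn, Set.ncard_coe_finset, hDcard]
  intro a ha b hb hab
  by_contra hne
  have h1 := congrFun hab a
  simp [Function.update_apply, hne] at h1
  have ha' : x a ≠ y a := by simpa [hD] using ha
  exact ha' h1

lemma ncard_setOf {V : Type*} [Fintype V] (p : V → Prop) [DecidablePred p] :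
    {x | p x}.ncard = (Finset.univ.filter p).card := by
  rw [← Set.ncard_coe_finset]; congr 1; ext; simp

section DistTo
variable {C : Set (Fin n → α)}

lemma distTo_le (v : Fin n → α) {c : Fin n → α} (hc : c ∈ C) :
    distTo (hammingGraph n α) C v ≤ (hammingGraph n α).dist v c :=
  Nat.sInf_le ⟨c, hc, rfl⟩

lemma distTo_exists (hCne : C.Nonempty) (v : Fin n → α) :
    ∃ c ∈ C, (hammingGraph n α).dist v c = distTo (hammingGraph n α) C v := by
  obtain ⟨c, hc, hdist⟩ := Nat.sInf_mem (hCne.image ((hammingGraph n α).dist v))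
  exact ⟨c, hc, hdist⟩

lemma distTo_lip (hCne : C.Nonempty) (u v : Fin n → α) :
    distTo (hammingGraph n α) C v ≤ distTo (hammingGraph n α) C u + hammingDist v u := by
  obtain ⟨c, hc, hdist⟩ := distTo_exists hCne u
  calc distTo (hammingGraph n α) C v ≤ (hammingGraph n α).dist v c := distTo_le v hc
    _ = hammingDist v c := hamming_dist_eq v c
    _ ≤ hammingDist v u + hammingDist u c := hammingDist_triangle v u c
    _ = hammingDist v u + distTo (hammingGraph n α) C u := by
        rw [← hdist, hamming_dist_eq]
    _ = _ := Nat.add_comm _ _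

lemma distTo_mem (c : Fin n → α) (hc : c ∈ C) : distTo (hammingGraph n α) C c = 0 := by
  have := distTo_le c hc
  rw [SimpleGraph.dist_self] at this
  omega

lemma distTo_ivt (hCne : C.Nonempty) {a b : Fin n → α}
    (w : (hammingGraph n α).Walk a b) : ∀ t : ℕ,
    distTo (hammingGraph n α) C b ≤ t → t ≤ distTo (hammingGraph n α) C a →
    ∃ u, distTo (hammingGraph n α) C u = t := by
  induction w with
  | nil => exact fun t hb ha => ⟨_, le_antisymm hb ha⟩
  | @cons a a' b h p ih =>
    intro t hb ha
    by_cases hat : distTo (hammingGraph n α) C a = t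
    · exact ⟨a, hat⟩
    · refine ih t hb ?_
      have hlip := distTo_lip hCne a' a
      have h1 : hammingDist a a' = 1 := h
      rw [h1] at hlip
      omega

end DistTo

section Count
variable [Fintype α] {C : Set (Fin n → α)} {ρ : ℕ} {β γ : ℕ → ℕ}

lemma beta_prod (hC : IsCompletelyRegular (hammingGraph n α) C ρ β γ) {v0 : Fin n → α}
    {j : ℕ} (h0 : distTo (hammingGraph n α) C v0 = j) :
    ∀ k, j + k ≤ ρ → ∏ l ∈ Finset.range k, β (j + l)
      = Nat.factorial k * (Finset.univ.filter
          (fun u => hammingDist v0 u = k ∧ distTo (hammingGraph n α) C u = j + k)).card := by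
  classical
  obtain ⟨hCne, hub, hattain, hβ, hγ⟩ := hC
  intro k
  induction k with
  | zero =>
    intro _
    have : (Finset.univ.filter
        (fun u => hammingDist v0 u = 0 ∧ distTo (hammingGraph n α) C u = j + 0)) = {v0} := by
      ext u
      simp only [Finset.mem_filter, Finset.mem_univ, true_and, Finset.mem_singleton,
        Nat.add_zero]
      constructor
      · rintro ⟨h1, -⟩
        exact (eq_of_hammingDist_eq_zero (by rwa [hammingDist_comm]))
      · rintro rfl; exact ⟨hammingDist_self _, h0⟩
    rw [this]
    simp
  | succ k ih =>
    intro hk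
    set Sk := Finset.univ.filter
      (fun u => hammingDist v0 u = k ∧ distTo (hammingGraph n α) C u = j + k) with hSk
    set Sk1 := Finset.univ.filter
      (fun u => hammingDist v0 u = k + 1 ∧ distTo (hammingGraph n α) C u = j + (k + 1)) with hSk1
    have count1 : ∀ u ∈ Sk, (Sk1.filter (fun w => (hammingGraph n α).Adj u w)).card
        = β (j + k) := by
      intro u hu
      rw [hSk, Finset.mem_filter] at hu
      obtain ⟨-, hdu, htu⟩ := hu
      have hb := hβ u (j + k) htu (by omega)
      rw [ncard_setOf] at hb
      rw [← hb]
      congr 1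
      ext w
      simp only [hSk1, Finset.mem_filter, Finset.mem_univ, true_and]
      constructor
      · rintro ⟨⟨-, h2⟩, h3⟩; exact ⟨h3, by omega⟩
      · rintro ⟨hadj, hdw⟩
        refine ⟨⟨?_, by omega⟩, hadj⟩
        have hle : hammingDist v0 w ≤ k + 1 := by
          have := hammingDist_triangle v0 u w
          have h1 : hammingDist u w = 1 := hadj
          omega
        have hge := distTo_lip hCne v0 w
        rw [h0, hdw, hammingDist_comm] at hge
        omega
    have count2 : ∀ w ∈ Sk1, (Sk.filter (fun u => (hammingGraph n α).Adj w u)).card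
        = k + 1 := by
      intro w hw
      rw [hSk1, Finset.mem_filter] at hw
      obtain ⟨-, hdw, htw⟩ := hw
      have hc := hamming_c (x := v0) (y := w) (by omega)
      rw [hdw, ncard_setOf] at hc
      rw [← hc]
      congr 1
      ext u
      simp only [hSk, Finset.mem_filter, Finset.mem_univ, true_and]
      constructor
      · rintro ⟨⟨h1, -⟩, h3⟩; exact ⟨h3, by omega⟩
      · rintro ⟨hadj, hdu⟩
        refine ⟨⟨by omega, ?_⟩, hadj⟩
        have h1 : hammingDist w u = 1 := hadj
        have hge := distTo_lip hCne u w
        rw [htw, h1] at hge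
        have hle := distTo_lip hCne v0 u
        rw [h0, hammingDist_comm, hdu] at hle
        omega
    have swap : ∑ u ∈ Sk, (Sk1.filter (fun w => (hammingGraph n α).Adj u w)).card
        = ∑ w ∈ Sk1, (Sk.filter (fun u => (hammingGraph n α).Adj w u)).card := by
      simp_rw [Finset.card_filter]
      rw [Finset.sum_comm]
      refine Finset.sum_congr rfl fun w _ => Finset.sum_congr rfl fun u _ => ?_
      rw [adj_comm]
    rw [Finset.sum_congr rfl count1, Finset.sum_congr rfl count2,
      Finset.sum_const, Finset.sum_const, smul_eq_mul, smul_eq_mul] at swap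
    rw [Finset.prod_range_succ, ih (by omega), Nat.factorial_succ]
    calc Nat.factorial k * Sk.card * β (j + k)
        = Nat.factorial k * (Sk.card * β (j + k)) := by ring
      _ = Nat.factorial k * (Sk1.card * (k + 1)) := by rw [swap]
      _ = (k + 1) * Nat.factorial k * Sk1.card := by ring

lemma gamma_prod (hC : IsCompletelyRegular (hammingGraph n α) C ρ β γ) {v0 : Fin n → α}
    {s : ℕ} (h0 : distTo (hammingGraph n α) C v0 = s) :
    ∀ k, k ≤ s → ∏ l ∈ Finset.range k, γ (s - l)
      = Nat.factorial k * (Finset.univ.filter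
          (fun u => hammingDist v0 u = k ∧ distTo (hammingGraph n α) C u = s - k)).card := by
  classical
  obtain ⟨hCne, hub, hattain, hβ, hγ⟩ := hC
  intro k
  induction k with
  | zero =>
    intro _
    have : (Finset.univ.filter
        (fun u => hammingDist v0 u = 0 ∧ distTo (hammingGraph n α) C u = s - 0)) = {v0} := by
      ext u
      simp only [Finset.mem_filter, Finset.mem_univ, true_and, Finset.mem_singleton,
        Nat.sub_zero]
      constructor
      · rintro ⟨h1, -⟩
        exact (eq_of_hammingDist_eq_zero (by rwa [hammingDist_comm]))
      · rintro rfl; exact ⟨hammingDist_self _, h0⟩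
    rw [this]
    simp
  | succ k ih =>
    intro hk
    set Sk := Finset.univ.filter
      (fun u => hammingDist v0 u = k ∧ distTo (hammingGraph n α) C u = s - k) with hSk
    set Sk1 := Finset.univ.filter
      (fun u => hammingDist v0 u = k + 1 ∧ distTo (hammingGraph n α) C u = s - (k + 1)) with hSk1
    have count1 : ∀ u ∈ Sk, (Sk1.filter (fun w => (hammingGraph n α).Adj u w)).card
        = γ (s - k) := by
      intro u hu
      rw [hSk, Finset.mem_filter] at hu
      obtain ⟨-, hdu, htu⟩ := hu
      have hb := hγ u (s - k) htu (by omega)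
      rw [ncard_setOf] at hb
      rw [← hb]
      congr 1
      ext w
      simp only [hSk1, Finset.mem_filter, Finset.mem_univ, true_and]
      constructor
      · rintro ⟨⟨-, h2⟩, h3⟩; exact ⟨h3, by omega⟩
      · rintro ⟨hadj, hdw⟩
        refine ⟨⟨?_, by omega⟩, hadj⟩
        have h1 : hammingDist u w = 1 := hadj
        have hle : hammingDist v0 w ≤ k + 1 := by
          have := hammingDist_triangle v0 u w
          omega
        have hge := distTo_lip hCne w v0
        rw [h0, hdw] at hge
        omega
    have count2 : ∀ w ∈ Sk1, (Sk.filter (fun u => (hammingGraph n α).Adj w u)).card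
        = k + 1 := by
      intro w hw
      rw [hSk1, Finset.mem_filter] at hw
      obtain ⟨-, hdw, htw⟩ := hw
      have hc := hamming_c (x := v0) (y := w) (by omega)
      rw [hdw, ncard_setOf] at hc
      rw [← hc]
      congr 1
      ext u
      simp only [hSk, Finset.mem_filter, Finset.mem_univ, true_and]
      constructor
      · rintro ⟨⟨h1, -⟩, h3⟩; exact ⟨h3, by omega⟩
      · rintro ⟨hadj, hdu⟩
        refine ⟨⟨by omega, ?_⟩, hadj⟩
        have h1 : hammingDist w u = 1 := hadj
        have hle := distTo_lip hCne w u
        rw [htw, hammingDist_comm, h1] at hle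
        have hge := distTo_lip hCne u v0
        rw [h0, hdu] at hge
        omega
    have swap : ∑ u ∈ Sk, (Sk1.filter (fun w => (hammingGraph n α).Adj u w)).card
        = ∑ w ∈ Sk1, (Sk.filter (fun u => (hammingGraph n α).Adj w u)).card := by
      simp_rw [Finset.card_filter]
      rw [Finset.sum_comm]
      refine Finset.sum_congr rfl fun w _ => Finset.sum_congr rfl fun u _ => ?_
      rw [adj_comm]
    rw [Finset.sum_congr rfl count1, Finset.sum_congr rfl count2,
      Finset.sum_const, Finset.sum_const, smul_eq_mul, smul_eq_mul] at swap
    rw [Finset.prod_range_succ, ih (by omega), Nat.factorial_succ]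
    calc Nat.factorial k * Sk.card * γ (s - k)
        = Nat.factorial k * (Sk.card * γ (s - k)) := by ring
      _ = Nat.factorial k * (Sk1.card * (k + 1)) := by rw [swap]
      _ = (k + 1) * Nat.factorial k * Sk1.card := by ring

end Count

end CRCAux

/-- If a completely regular code with intersection array `{β 0,…,β (ρ-1); γ 1,…,γ ρ}`
exists in a Hamming graph `H(n,q)`, then for all `1 ≤ i` and `j` with `i + j ≤ ρ`,
the product `β j · β (j+1) ⋯ β (j+i-1)` is divisible by `i!`, and likewise
`γ (j+1) · γ (j+2) ⋯ γ (j+i)` is divisible by `i!`. -/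
theorem crc_hamming_factorial_dvd (n q : ℕ) (C : Set (Fin n → Fin q)) (ρ : ℕ)
    (β γ : ℕ → ℕ)
    (hC : IsCompletelyRegular (hammingGraph n (Fin q)) C ρ β γ)
    (i j : ℕ) (hi : 1 ≤ i) (hij : i + j ≤ ρ) :
    (Nat.factorial i ∣ ∏ l ∈ Finset.range i, β (j + l)) ∧
    (Nat.factorial i ∣ ∏ l ∈ Finset.range i, γ (j + l + 1)) := by
  classical
  obtain ⟨vρ, hvρ⟩ := hC.2.2.1
  obtain ⟨c, hc⟩ := hC.1
  have hCne : C.Nonempty := ⟨c, hc⟩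
  obtain ⟨w, -⟩ := hamming_exists_walk (hammingDist vρ c) vρ c rfl
  have hc0 : distTo (hammingGraph n (Fin q)) C c = 0 := distTo_mem c hc
  obtain ⟨vj, hvj⟩ := distTo_ivt hCne w j (by omega) (by omega)
  obtain ⟨vi, hvi⟩ := distTo_ivt hCne w (j + i) (by omega) (by omega)
  refine ⟨⟨_, beta_prod hC hvj i (by omega)⟩, ?_⟩
  have hg := gamma_prod hC hvi i (by omega)
  have hre : ∏ l ∈ Finset.range i, γ (j + i - l) = ∏ l ∈ Finset.range i, γ (j + l + 1) := by
    rw [← Finset.prod_range_reflect (fun l => γ (j + l + 1)) i]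
    refine Finset.prod_congr rfl fun l hl => ?_
    rw [Finset.mem_range] at hl
    congr 1
    omega
  rw [← hre]
  exact ⟨_, hg⟩
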